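/- Let f : {0,1}^n → {0,1} be a Boolean function and let H ⊆ [n]. For h ∈ {0,1}^H, let ρ_h denote the restriction that sets the variables in H according to h and leaves the other variables free. Then ℓ(f) ≤ 2^{|H|} · ( max_{h ∈ {0,1}^H} ℓ(f|ρ_h) + |H| ), where ℓ(g) denotes the minimum number of wires in a comparator circuit computing g. -/

import Mathlib

/-- A comparator circuit on `n` Boolean variables with `ℓ` wires.
Each wire is labelled by a literal: a pair `(i, neg)` meaning the variable `x_i`
if `neg = false` and its negation `¬x_i` if `neg = true`.  Each gate is an ordered
pair of distinct wires `(w, w')`: applying it, `w` receives the conjunction of the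
two held values and `w'` receives their disjunction.  A designated output wire
carries the result of the computation. -/
structure CompCircuit (n ℓ : ℕ) where
  label : Fin ℓ → Fin n × Bool
  gates : List (Fin ℓ × Fin ℓ)
  distinct : ∀ g ∈ gates, g.1 ≠ g.2
  out : Fin ℓ

namespace CompCircuit

variable {n ℓ : ℕ}

/-- Value of the literal `(i, neg)` on input `x`. -/
def litVal (x : Fin n → Bool) (p : Fin n × Bool) : Bool :=
  if p.2 then !(x p.1) else x p.1

/-- Applying a comparator gate to the current wire values. -/
def applyGate (g : Fin ℓ × Fin ℓ) (v : Fin ℓ → Bool) : Fin ℓ → Bool :=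
  fun w => if w = g.1 then v g.1 && v g.2 else if w = g.2 then v g.1 || v g.2 else v w

/-- Initial wire values on input `x`: each wire holds the value of its literal. -/
def init (C : CompCircuit n ℓ) (x : Fin n → Bool) : Fin ℓ → Bool :=
  fun w => litVal x (C.label w)

/-- Wire values after all the gates have been applied in order. -/
def run (C : CompCircuit n ℓ) (x : Fin n → Bool) : Fin ℓ → Bool :=
  C.gates.foldl (fun v g => applyGate g v) (C.init x)

/-- The output of the circuit: the final value of the output wire. -/
def eval (C : CompCircuit n ℓ) (x : Fin n → Bool) : Bool :=
  C.run x C.out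

/-- Wire values after the first `t` gates have been applied (i.e. just before gate `t`). -/
def stateAfter (C : CompCircuit n ℓ) (x : Fin n → Bool) (t : ℕ) : Fin ℓ → Bool :=
  (C.gates.take t).foldl (fun v g => applyGate g v) (C.init x)

/-- The pair `(u_g(x), v_g(x))` of in-values of gate number `i` on input `x`. -/
def gateIn (C : CompCircuit n ℓ) (x : Fin n → Bool) (i : Fin C.gates.length) : Bool × Bool :=
  (C.stateAfter x i (C.gates.get i).1, C.stateAfter x i (C.gates.get i).2)

/-- Gate `i` is TYPE-1 useless: its in-values never form the pair `(1,0)`,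
i.e. they always lie in `{(0,1),(0,0),(1,1)}`. -/
def Type1UselessAt (C : CompCircuit n ℓ) (i : Fin C.gates.length) : Prop :=
  ∀ x : Fin n → Bool, C.gateIn x i ≠ (true, false)

/-- Gate `i` is TYPE-2 useless: its in-values never form the pair `(0,1)`,
i.e. they always lie in `{(1,0),(0,0),(1,1)}`. -/
def Type2UselessAt (C : CompCircuit n ℓ) (i : Fin C.gates.length) : Prop :=
  ∀ x : Fin n → Bool, C.gateIn x i ≠ (false, true)

/-- Gate `i` is useless if it is TYPE-1 or TYPE-2 useless. -/
def UselessAt (C : CompCircuit n ℓ) (i : Fin C.gates.length) : Prop :=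
  C.Type1UselessAt i ∨ C.Type2UselessAt i

end CompCircuit

/-- `wireComplexity f` is the minimum number of wires in a comparator circuit computing `f`. -/
noncomputable def wireComplexity {n : ℕ} (f : (Fin n → Bool) → Bool) : ℕ :=
  sInf {ℓ : ℕ | ∃ C : CompCircuit n ℓ, ∀ x, C.eval x = f x}




namespace Aux

variable {V W : Type*} [DecidableEq V] [DecidableEq W]

def apG (g : V × V) (v : V → Bool) : V → Bool :=
  fun w => if w = g.1 then v g.1 && v g.2 else if w = g.2 then v g.1 || v g.2 else v w

def runG (gs : List (V × V)) (v : V → Bool) : V → Bool :=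
  gs.foldl (fun v g => apG g v) v

lemma runG_cons (g : V × V) (gs : List (V × V)) (v : V → Bool) :
    runG (g :: gs) v = runG gs (apG g v) := rfl

lemma runG_append (gs₁ gs₂ : List (V × V)) (v : V → Bool) :
    runG (gs₁ ++ gs₂) v = runG gs₂ (runG gs₁ v) := by
  simp [runG, List.foldl_append]

lemma apG_notmem {g : V × V} {w : V} (h1 : w ≠ g.1) (h2 : w ≠ g.2) (v : V → Bool) :
    apG g v w = v w := by simp [apG, h1, h2]

lemma runG_notmem (gs : List (V × V)) (v : V → Bool) (w : V)
    (h : ∀ g ∈ gs, w ≠ g.1 ∧ w ≠ g.2) : runG gs v w = v w := by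
  induction gs generalizing v with
  | nil => rfl
  | cons g gs ih =>
    rw [runG_cons, ih _ fun g' hg' => h g' (List.mem_cons_of_mem _ hg')]
    exact apG_notmem (h g (List.mem_cons_self)).1 (h g (List.mem_cons_self)).2 v

lemma runG_congrOn (gs : List (V × V)) (A : Set V)
    (hg : ∀ g ∈ gs, g.1 ∈ A ∧ g.2 ∈ A) (v v' : V → Bool)
    (hv : ∀ w ∈ A, v w = v' w) : ∀ w ∈ A, runG gs v w = runG gs v' w := by
  induction gs generalizing v v' with
  | nil => exact hv
  | cons g gs ih =>
    have h1 := hg g (List.mem_cons_self)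
    rw [runG_cons]
    intro w hw
    rw [runG_cons]
    refine ih (fun g' h' => hg g' (List.mem_cons_of_mem _ h')) _ _ ?_ w hw
    intro u hu
    by_cases e1 : u = g.1
    · simp [apG, e1, hv _ h1.1, hv _ h1.2]
    · by_cases e2 : u = g.2
      · simp [apG, e1, e2, hv _ h1.1, hv _ h1.2]
      · simp [apG, e1, e2, hv _ hu]

lemma apG_map (e : V → W) (he : Function.Injective e) (g : V × V) (v : W → Bool) (w : V) :
    apG (Prod.map e e g) v (e w) = apG g (fun u => v (e u)) w := by
  simp only [apG, Prod.map, he.eq_iff]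

lemma runG_map (e : V → W) (he : Function.Injective e) (gs : List (V × V))
    (v : W → Bool) (w : V) :
    runG (gs.map (Prod.map e e)) v (e w) = runG gs (fun u => v (e u)) w := by
  induction gs generalizing v with
  | nil => rfl
  | cons g gs ih =>
    rw [List.map_cons, runG_cons, runG_cons, ih]
    congr 1
    funext u
    exact apG_map e he g v u

lemma list_all_congr {α : Type*} (l : List α) (p q : α → Bool) (h : ∀ a ∈ l, p a = q a) :
    l.all p = l.all q := by
  induction l with
  | nil => rfl
  | cons a t ih =>
    simp only [List.all_cons, h a (List.mem_cons_self),
      ih fun b hb => h b (List.mem_cons_of_mem _ hb)]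

lemma and_fold (out : V) (cs : List V) (h1 : out ∉ cs) (h2 : cs.Nodup) (v : V → Bool) :
    runG (cs.map (fun c => (out, c))) v out = (v out && cs.all (fun c => v c)) := by
  induction cs generalizing v with
  | nil => simp [runG]
  | cons c cs ih =>
    have hoc : out ≠ c := fun h => h1 (h ▸ List.mem_cons_self)
    have hocs : out ∉ cs := fun h => h1 (List.mem_cons_of_mem _ h)
    have hccs : c ∉ cs := (List.nodup_cons.1 h2).1
    rw [List.map_cons, runG_cons, ih hocs (List.nodup_cons.1 h2).2]
    have ha : apG (out, c) v out = (v out && v c) := by simp [apG]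
    have hb : cs.all (fun c' => apG (out, c) v c') = cs.all (fun c' => v c') := by
      refine list_all_congr _ _ _ fun c' hc' => ?_
      exact apG_notmem (fun h : c' = out => hocs (h ▸ hc'))
        (fun h : c' = c => hccs (h ▸ hc')) v
    rw [ha, hb, List.all_cons, Bool.and_assoc]

lemma list_any_congr {α : Type*} (l : List α) (p q : α → Bool) (h : ∀ a ∈ l, p a = q a) :
    l.any p = l.any q := by
  induction l with
  | nil => rfl
  | cons a t ih =>
    simp only [List.any_cons, h a (List.mem_cons_self),
      ih fun b hb => h b (List.mem_cons_of_mem _ hb)]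

lemma or_fold (out : V) (cs : List V) (h1 : out ∉ cs) (h2 : cs.Nodup) (v : V → Bool) :
    runG (cs.map (fun c => (c, out))) v out = (v out || cs.any (fun c => v c)) := by
  induction cs generalizing v with
  | nil => simp [runG]
  | cons c cs ih =>
    have hoc : out ≠ c := fun h => h1 (h ▸ List.mem_cons_self)
    have hocs : out ∉ cs := fun h => h1 (List.mem_cons_of_mem _ h)
    have hccs : c ∉ cs := (List.nodup_cons.1 h2).1
    rw [List.map_cons, runG_cons, ih hocs (List.nodup_cons.1 h2).2]
    have ha : apG (c, out) v out = (v c || v out) := by simp [apG, hoc]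
    have hb : cs.any (fun c' => apG (c, out) v c') = cs.any (fun c' => v c') := by
      refine list_any_congr _ _ _ fun c' hc' => ?_
      exact apG_notmem (fun h : c' = c => hccs (h ▸ hc'))
        (fun h : c' = out => hocs (h ▸ hc')) v
    rw [ha, hb, List.any_cons]
    cases v c <;> cases v out <;> simp

lemma join_blocks {I : Type*} (Gb : I → List (V × V)) (π : V → I)
    (hsupp : ∀ i, ∀ g ∈ Gb i, π g.1 = i ∧ π g.2 = i)
    (l : List I) (hl : l.Nodup) (v : V → Bool) (i : I) (hi : i ∈ l)
    (w : V) (hw : π w = i) :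
    runG ((l.map Gb).flatten) v w = runG (Gb i) v w := by
  induction l generalizing v with
  | nil => cases hi
  | cons a t ih =>
    rw [List.map_cons, List.flatten_cons, runG_append]
    rcases List.mem_cons.1 hi with rfl | hit
    · have hat : i ∉ t := (List.nodup_cons.1 hl).1
      refine runG_notmem _ _ _ fun g hg => ?_
      rcases List.mem_flatten.1 hg with ⟨L, hL, hgL⟩
      rcases List.mem_map.1 hL with ⟨b, hb, rfl⟩
      have hsg := hsupp b g hgL
      constructor
      · intro h
        have hib : i = b := by rw [← hw, h, hsg.1]
        exact hat (hib ▸ hb)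
      · intro h
        have hib : i = b := by rw [← hw, h, hsg.2]
        exact hat (hib ▸ hb)
    · have hia : i ≠ a := fun h => (List.nodup_cons.1 hl).1 (h ▸ hit)
      rw [ih (List.nodup_cons.1 hl).2 _ hit]
      refine runG_congrOn (Gb i) {u | π u = i} (hsupp i) _ _ ?_ w hw
      intro u hu
      refine runG_notmem (Gb a) v u fun g hg => ?_
      have hsg := hsupp a g hg
      constructor
      · intro h; exact hia (by rw [← hu, h, hsg.1])
      · intro h; exact hia (by rw [← hu, h, hsg.2])




lemma run_eq_runG {n ℓ : ℕ} (C : CompCircuit n ℓ) (x : Fin n → Bool) :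
    C.run x = runG C.gates (C.init x) := rfl

lemma litval_eq {n : ℕ} (x : Fin n → Bool) (i : Fin n) (b : Bool) :
    CompCircuit.litVal x (i, !b) = (b == x i) := by
  cases b <;> simp [CompCircuit.litVal]

lemma all_map' {α β : Type*} (l : List α) (f : α → β) (p : β → Bool) :
    (l.map f).all p = l.all (p ∘ f) := by
  induction l <;> simp_all

lemma any_map' {α β : Type*} (l : List α) (f : α → β) (p : β → Bool) :
    (l.map f).any p = l.any (p ∘ f) := by
  induction l <;> simp_all

lemma card_mem {n : ℕ} (f : (Fin n → Bool) → Bool) (W : Type) [Fintype W] [DecidableEq W]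
    (label : W → Fin n × Bool) (gates : List (W × W)) (hd : ∀ g ∈ gates, g.1 ≠ g.2)
    (out : W)
    (hcorr : ∀ x, runG gates (fun w => CompCircuit.litVal x (label w)) out = f x) :
    ∃ C : CompCircuit n (Fintype.card W), ∀ x, C.eval x = f x := by
  set e := Fintype.equivFin W with he
  refine ⟨⟨fun j => label (e.symm j), gates.map (Prod.map e e), ?_, e out⟩, ?_⟩
  · intro g hg
    rcases List.mem_map.1 hg with ⟨g', hg', rfl⟩
    exact fun hh => hd g' hg' (e.injective hh)
  · intro x
    show runG (gates.map (Prod.map e e))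
      (fun j => CompCircuit.litVal x (label (e.symm j))) (e out) = f x
    rw [runG_map (e : W → Fin (Fintype.card W)) e.injective]
    have h2 : (fun u => CompCircuit.litVal x (label (e.symm (e u))))
        = (fun w => CompCircuit.litVal x (label w)) := by
      funext u; rw [Equiv.symm_apply_apply]
    rw [h2, hcorr]

lemma pad {n ℓ M : ℕ} (hn : 0 < n) (hlM : ℓ ≤ M) (C : CompCircuit n ℓ) :
    ∃ C' : CompCircuit n M, ∀ x, C'.eval x = C.eval x := by
  refine ⟨⟨fun j => if hj : (j : ℕ) < ℓ then C.label ⟨j, hj⟩ else (⟨0, hn⟩, false),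
      C.gates.map (Prod.map (Fin.castLE hlM) (Fin.castLE hlM)), ?_, Fin.castLE hlM C.out⟩, ?_⟩
  · intro g hg
    rcases List.mem_map.1 hg with ⟨g', hg', rfl⟩
    exact fun hh => C.distinct g' hg' (Fin.castLE_injective hlM hh)
  · intro x
    show runG (C.gates.map (Prod.map (Fin.castLE hlM) (Fin.castLE hlM)))
      (fun j => CompCircuit.litVal x
        (if hj : (j : ℕ) < ℓ then C.label ⟨j, hj⟩ else (⟨0, hn⟩, false)))
      (Fin.castLE hlM C.out) = C.eval x
    rw [runG_map _ (Fin.castLE_injective hlM)]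
    have h2 : (fun u : Fin ℓ => CompCircuit.litVal x
        (if hj : ((Fin.castLE hlM u : Fin M) : ℕ) < ℓ then C.label ⟨(Fin.castLE hlM u : Fin M), hj⟩
          else (⟨0, hn⟩, false))) = C.init x := by
      funext u
      have hu : ((Fin.castLE hlM u : Fin M) : ℕ) < ℓ := u.isLt
      simp only [hu, dif_pos, CompCircuit.init]
      congr 1
    rw [h2]
    rfl

lemma exists_circuit {n : ℕ} (hn : 0 < n) (f : (Fin n → Bool) → Bool) :
    {ℓ : ℕ | ∃ C : CompCircuit n ℓ, ∀ x, C.eval x = f x}.Nonempty := by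
  classical
  set i0 : Fin n := ⟨0, hn⟩ with hi0
  let label : ((Fin n → Bool) × Fin n) ⊕ Bool → Fin n × Bool := fun w =>
    match w with
    | Sum.inl (a, i) => (i, !a i)
    | Sum.inr b => (i0, b)
  let andBlock : (Fin n → Bool) → List ((((Fin n → Bool) × Fin n) ⊕ Bool) × (((Fin n → Bool) × Fin n) ⊕ Bool)) := fun a =>
    ((Finset.univ.erase i0).toList.map (fun i => Sum.inl (a, i))).map
      (fun c => (Sum.inl (a, i0), c))
  let orGates : List ((((Fin n → Bool) × Fin n) ⊕ Bool) × (((Fin n → Bool) × Fin n) ⊕ Bool)) :=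
    (((Finset.univ.filter (fun a => f a = true)).toList).map (fun a => Sum.inl (a, i0))).map
      (fun c => (c, Sum.inr false))
  let gates := (Sum.inr false, Sum.inr true) ::
    ((((Finset.univ : Finset (Fin n → Bool)).toList.map andBlock).flatten) ++ orGates)
  have hd : ∀ g ∈ gates, g.1 ≠ g.2 := by
    intro g hg
    rcases List.mem_cons.1 hg with rfl | hg
    · simp
    rcases List.mem_append.1 hg with hg | hg
    · rcases List.mem_flatten.1 hg with ⟨L, hL, hgL⟩
      rcases List.mem_map.1 hL with ⟨a, ha, rfl⟩
      rcases List.mem_map.1 hgL with ⟨c, hc, rfl⟩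
      rcases List.mem_map.1 hc with ⟨i, hi, rfl⟩
      have : i ≠ i0 := (Finset.mem_erase.1 (Finset.mem_toList.1 hi)).1
      simp only [ne_eq, Sum.inl.injEq, Prod.mk.injEq]
      exact fun h => this (h.2.symm)
    · rcases List.mem_map.1 hg with ⟨c, hc, rfl⟩
      rcases List.mem_map.1 hc with ⟨a, ha, rfl⟩
      simp
  have hcorr : ∀ x, runG gates (fun w => CompCircuit.litVal x (label w)) (Sum.inr false) = f x := by
    intro x
    set v0 : (((Fin n → Bool) × Fin n) ⊕ Bool) → Bool :=
      fun w => CompCircuit.litVal x (label w) with hv0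
    set v1 := apG (Sum.inr false, Sum.inr true) v0 with hv1
    set v2 := runG (((Finset.univ : Finset (Fin n → Bool)).toList.map andBlock).flatten) v1 with hv2
    have hrun : runG gates v0 (Sum.inr false) = runG orGates v2 (Sum.inr false) := by
      rw [show gates = (Sum.inr false, Sum.inr true) ::
        ((((Finset.univ : Finset (Fin n → Bool)).toList.map andBlock).flatten) ++ orGates) from rfl,
        runG_cons, runG_append]
    have hv1inl : ∀ p, v1 (Sum.inl p) = v0 (Sum.inl p) := fun p =>
      apG_notmem (by simp) (by simp) v0
    have hv1outF : v1 (Sum.inr false) = false := by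
      have : v1 (Sum.inr false) = (v0 (Sum.inr false) && v0 (Sum.inr true)) := by
        simp [hv1, apG]
      rw [this]
      simp [hv0, CompCircuit.litVal, label]
    -- value of the AND blocks
    have hflat : ∀ g ∈ (((Finset.univ : Finset (Fin n → Bool)).toList.map andBlock).flatten),
        (∃ p, g.1 = Sum.inl p) ∧ (∃ p, g.2 = Sum.inl p) := by
      intro g hg
      rcases List.mem_flatten.1 hg with ⟨L, hL, hgL⟩
      rcases List.mem_map.1 hL with ⟨a, ha, rfl⟩
      rcases List.mem_map.1 hgL with ⟨c, hc, rfl⟩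
      rcases List.mem_map.1 hc with ⟨i, hi, rfl⟩
      exact ⟨⟨_, rfl⟩, ⟨_, rfl⟩⟩
    have hv2out : v2 (Sum.inr false) = false := by
      rw [hv2, runG_notmem _ _ _ ?_, hv1outF]
      intro g hg
      obtain ⟨⟨p1, h1⟩, ⟨p2, h2⟩⟩ := hflat g hg
      constructor
      · rw [h1]; exact fun h => by simp at h
      · rw [h2]; exact fun h => by simp at h
    have hs : ∀ a : Fin n → Bool, (v2 (Sum.inl (a, i0)) = true ↔ a = x) := by
      intro a
      have hjb : v2 (Sum.inl (a, i0)) = runG (andBlock a) v1 (Sum.inl (a, i0)) := by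
        rw [hv2]
        have hmap : ((Finset.univ : Finset (Fin n → Bool)).toList.map andBlock)
            = (((Finset.univ : Finset (Fin n → Bool)).toList.map some).map
                (fun o => Option.rec [] andBlock o)) := by
          rw [List.map_map]; rfl
        rw [hmap]
        exact join_blocks (fun o => Option.rec [] andBlock o)
          (fun w => match w with | Sum.inl (a, _) => some a | Sum.inr _ => none)
          (by
            rintro (_ | b) g hg
            · cases hg
            · rcases List.mem_map.1 hg with ⟨c, hc, rfl⟩
              rcases List.mem_map.1 hc with ⟨i, hi, rfl⟩
              exact ⟨rfl, rfl⟩)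
          _ ((Finset.univ.nodup_toList).map (Option.some_injective _)) v1 (some a)
          (List.mem_map.2 ⟨a, Finset.mem_toList.2 (Finset.mem_univ a), rfl⟩)
          (Sum.inl (a, i0)) rfl
      have hout : Sum.inl (a, i0) ∉
          (Finset.univ.erase i0).toList.map (fun i => (Sum.inl (a, i) : ((Fin n → Bool) × Fin n) ⊕ Bool)) := by
        intro h
        rcases List.mem_map.1 h with ⟨i, hi, hie⟩
        have : i = i0 := by
          have := Sum.inl.inj hie
          exact (Prod.mk.injEq _ _ _ _ ▸ this).2
        exact (Finset.mem_erase.1 (Finset.mem_toList.1 hi)).1 this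
      have hnd : ((Finset.univ.erase i0).toList.map
          (fun i => (Sum.inl (a, i) : ((Fin n → Bool) × Fin n) ⊕ Bool))).Nodup :=
        ((Finset.univ.erase i0).nodup_toList).map
          (fun i j h => by simpa using (Sum.inl.inj h))
      rw [hjb, and_fold _ _ hout hnd]
      have hval : ∀ i : Fin n, v1 (Sum.inl (a, i)) = (a i == x i) := by
        intro i
        rw [hv1inl, hv0]
        exact litval_eq x i (a i)
      have hall : (((Finset.univ.erase i0).toList.map
            (fun i => (Sum.inl (a, i) : ((Fin n → Bool) × Fin n) ⊕ Bool))).all (fun c => v1 c))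
          = ((Finset.univ.erase i0).toList.all (fun i => a i == x i)) := by
        rw [all_map']
        exact list_all_congr _ _ _ fun i _ => hval i
      rw [hall, hval i0]
      constructor
      · intro h
        funext i
        rw [Bool.and_eq_true] at h
        rcases h with ⟨h1, h2⟩
        by_cases hii : i = i0
        · subst hii; exact beq_iff_eq.1 h1
        · have := List.all_eq_true.1 h2 i
            (Finset.mem_toList.2 (Finset.mem_erase.2 ⟨hii, Finset.mem_univ i⟩))
          exact beq_iff_eq.1 this
      · rintro rfl
        rw [Bool.and_eq_true]
        exact ⟨beq_self_eq_true _, List.all_eq_true.2 fun i _ => beq_self_eq_true _⟩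
    -- or phase
    have houtor : (Sum.inr false : ((Fin n → Bool) × Fin n) ⊕ Bool) ∉
        ((Finset.univ.filter (fun a => f a = true)).toList).map
          (fun a => (Sum.inl (a, i0) : ((Fin n → Bool) × Fin n) ⊕ Bool)) := by
      intro h
      rcases List.mem_map.1 h with ⟨a, _, hie⟩
      cases hie
    have hndor : (((Finset.univ.filter (fun a => f a = true)).toList).map
        (fun a => (Sum.inl (a, i0) : ((Fin n → Bool) × Fin n) ⊕ Bool))).Nodup :=
      ((Finset.univ.filter (fun a => f a = true)).nodup_toList).map
        (fun a b h => by simpa using (Sum.inl.inj h))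
    rw [hrun, or_fold _ _ houtor hndor, hv2out, any_map']
    simp only [Bool.false_or]
    cases hf : f x with
    | true =>
      refine List.any_eq_true.2 ⟨x, ?_, ?_⟩
      · exact Finset.mem_toList.2 (Finset.mem_filter.2 ⟨Finset.mem_univ x, hf⟩)
      · exact (hs x).2 rfl
    | false =>
      refine List.any_eq_false.2 fun a ha => fun hsa => ?_
      have hax : a = x := (hs a).1 hsa
      have hfa : f a = true := (Finset.mem_filter.1 (Finset.mem_toList.1 ha)).2
      rw [hax, hf] at hfa
      cases hfa
  obtain ⟨C, hC⟩ := card_mem f (((Fin n → Bool) × Fin n) ⊕ Bool) label gates hd (Sum.inr false) hcorr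
  exact ⟨_, C, hC⟩


set_option synthInstance.maxHeartbeats 1000000 in
set_option maxHeartbeats 1000000 in
lemma combine {n : ℕ} (hn : 0 < n) (f : (Fin n → Bool) → Bool) (H : Finset (Fin n)) (M : ℕ)
    (D : ({i // i ∈ H} → Bool) → CompCircuit n M)
    (hD : ∀ h x, (D h).eval x = f (fun i => if hi : i ∈ H then h ⟨i, hi⟩ else x i)) :
    wireComplexity f ≤ 2 ^ H.card * (M + H.card) := by
  classical
  set h0 : {i // i ∈ H} → Bool := fun _ => true with hh0
  let label : ({i // i ∈ H} → Bool) × (Fin M ⊕ {i // i ∈ H}) → Fin n × Bool := fun w =>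
    match w with
    | (h, Sum.inl j) => (D h).label j
    | (h, Sum.inr i) => (i.1, ! h i)
  let r : ({i // i ∈ H} → Bool) → ({i // i ∈ H} → Bool) × (Fin M ⊕ {i // i ∈ H}) :=
    fun h => (h, Sum.inl (D h).out)
  let small : ({i // i ∈ H} → Bool) → List ((Fin M ⊕ {i // i ∈ H}) × (Fin M ⊕ {i // i ∈ H})) :=
    fun h => (D h).gates.map (Prod.map Sum.inl Sum.inl) ++
      ((Finset.univ.toList.map (Sum.inr : {i // i ∈ H} → Fin M ⊕ {i // i ∈ H})).map
        (fun c => (Sum.inl (D h).out, c)))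
  let G : ({i // i ∈ H} → Bool) →
      List ((({i // i ∈ H} → Bool) × (Fin M ⊕ {i // i ∈ H})) ×
        (({i // i ∈ H} → Bool) × (Fin M ⊕ {i // i ∈ H}))) :=
    fun h => (small h).map (Prod.map (Prod.mk h) (Prod.mk h))
  let gates := ((Finset.univ.toList.map G).flatten) ++
    (((Finset.univ.erase h0).toList.map r).map (fun c => (c, r h0)))
  have hmkinj : ∀ h : {i // i ∈ H} → Bool, Function.Injective
      (Prod.mk h : (Fin M ⊕ {i // i ∈ H}) → _) := by
    intro h a b hab
    exact (Prod.ext_iff.1 hab).2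
  have hrinj : Function.Injective r := by
    intro a b hab
    exact (Prod.ext_iff.1 hab).1
  have hsmall_distinct : ∀ h, ∀ g ∈ small h, g.1 ≠ g.2 := by
    intro h g hg
    rcases List.mem_append.1 hg with hg | hg
    · rcases List.mem_map.1 hg with ⟨g', hg', rfl⟩
      exact fun hh => (D h).distinct g' hg' (Sum.inl_injective hh)
    · rcases List.mem_map.1 hg with ⟨c, hc, rfl⟩
      rcases List.mem_map.1 hc with ⟨i, hi, rfl⟩
      simp
  have hGfst : ∀ h, ∀ g ∈ G h, g.1.1 = h ∧ g.2.1 = h := by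
    intro h g hg
    rcases List.mem_map.1 hg with ⟨g', _, rfl⟩
    exact ⟨rfl, rfl⟩
  have hd : ∀ g ∈ gates, g.1 ≠ g.2 := by
    intro g hg
    rcases List.mem_append.1 hg with hg | hg
    · rcases List.mem_flatten.1 hg with ⟨L, hL, hgL⟩
      rcases List.mem_map.1 hL with ⟨h, _, rfl⟩
      rcases List.mem_map.1 hgL with ⟨g', hg', rfl⟩
      exact fun hh => hsmall_distinct h g' hg' ((hmkinj h) hh)
    · rcases List.mem_map.1 hg with ⟨c, hc, rfl⟩
      rcases List.mem_map.1 hc with ⟨h, hh, rfl⟩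
      have hne : h ≠ h0 := (Finset.mem_erase.1 (Finset.mem_toList.1 hh)).1
      exact fun hrr => hne (hrinj hrr)
  have hcorr : ∀ x, runG gates (fun w => CompCircuit.litVal x (label w)) (r h0) = f x := by
    intro x
    set xh : {i // i ∈ H} → Bool := fun i => x i.1 with hxh
    set v0 : ({i // i ∈ H} → Bool) × (Fin M ⊕ {i // i ∈ H}) → Bool :=
      fun w => CompCircuit.litVal x (label w) with hv0
    set v2 := runG ((Finset.univ.toList.map G).flatten) v0 with hv2
    have hrun : runG gates v0 (r h0) =
        runG (((Finset.univ.erase h0).toList.map r).map (fun c => (c, r h0))) v2 (r h0) := by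
      rw [show gates = ((Finset.univ.toList.map G).flatten) ++
        (((Finset.univ.erase h0).toList.map r).map (fun c => (c, r h0))) from rfl, runG_append]
    -- value of each block's result wire after phase 1
    have hv2r : ∀ h, v2 (r h) =
        ((D h).eval x && Finset.univ.toList.all (fun i : {i // i ∈ H} => h i == x i.1)) := by
      intro h
      have hjb : v2 (r h) = runG (G h) v0 (r h) :=
        join_blocks G Prod.fst hGfst _
          ((Finset.univ.nodup_toList))
          v0 h (Finset.mem_toList.2 (Finset.mem_univ h)) (r h) rfl
      have hGm : runG (G h) v0 (r h) = runG (small h) (fun u => v0 (h, u)) (Sum.inl (D h).out) :=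
        runG_map (Prod.mk h) (hmkinj h) (small h) v0 (Sum.inl (D h).out)
      rw [hjb, hGm, show small h = (D h).gates.map (Prod.map Sum.inl Sum.inl) ++
        ((Finset.univ.toList.map (Sum.inr : {i // i ∈ H} → Fin M ⊕ {i // i ∈ H})).map
          (fun c => (Sum.inl (D h).out, c))) from rfl, runG_append]
      set vb := runG ((D h).gates.map (Prod.map Sum.inl Sum.inl)) (fun u => v0 (h, u)) with hvb
      have hb1 : ∀ j : Fin M, vb (Sum.inl j) = (D h).run x j := by
        intro j
        rw [hvb, runG_map Sum.inl Sum.inl_injective]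
        have : (fun u => v0 (h, Sum.inl u)) = (D h).init x := by
          funext u
          rfl
        rw [this, run_eq_runG]
      have hb2 : ∀ i : {i // i ∈ H}, vb (Sum.inr i) = (h i == x i.1) := by
        intro i
        rw [hvb, runG_notmem]
        · exact litval_eq x i.1 (h i)
        · intro g hg
          rcases List.mem_map.1 hg with ⟨g', _, rfl⟩
          constructor
          · exact fun hh => by simp [Prod.map] at hh
          · exact fun hh => by simp [Prod.map] at hh
      have hout : (Sum.inl (D h).out : Fin M ⊕ {i // i ∈ H}) ∉
          Finset.univ.toList.map (Sum.inr : {i // i ∈ H} → Fin M ⊕ {i // i ∈ H}) := by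
        intro hmem
        rcases List.mem_map.1 hmem with ⟨i, _, hie⟩
        cases hie
      have hnd : (Finset.univ.toList.map
          (Sum.inr : {i // i ∈ H} → Fin M ⊕ {i // i ∈ H})).Nodup :=
        (Finset.univ.nodup_toList).map Sum.inr_injective
      rw [and_fold _ _ hout hnd, hb1, all_map']
      have : (Finset.univ.toList.all ((fun c => vb c) ∘ (Sum.inr : {i // i ∈ H} → Fin M ⊕ {i // i ∈ H})))
          = Finset.univ.toList.all (fun i : {i // i ∈ H} => h i == x i.1) :=
        list_all_congr _ _ _ fun i _ => hb2 i
      rw [this]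
      rfl
    have hs : ∀ h, (v2 (r h) = true ↔ (h = xh ∧ f x = true)) := by
      intro h
      rw [hv2r, Bool.and_eq_true]
      constructor
      · rintro ⟨heval, hall⟩
        have hhx : h = xh := by
          funext i
          exact beq_iff_eq.1 (List.all_eq_true.1 hall i (Finset.mem_toList.2 (Finset.mem_univ i)))
        refine ⟨hhx, ?_⟩
        rw [← heval, hD h x]
        subst hhx
        congr 1
        funext i
        by_cases hi : i ∈ H
        · simp [hi, hxh]
        · simp [hi]
      · rintro ⟨rfl, hfx⟩
        constructor
        · rw [hD _ x, ← hfx]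
          congr 1
          funext i
          by_cases hi : i ∈ H
          · simp [hi, hxh]
          · simp [hi]
        · exact List.all_eq_true.2 fun i _ => beq_self_eq_true _
    have houtor : r h0 ∉ (Finset.univ.erase h0).toList.map r := by
      intro hmem
      rcases List.mem_map.1 hmem with ⟨h, hh, hre⟩
      exact (Finset.mem_erase.1 (Finset.mem_toList.1 hh)).1 (hrinj hre)
    have hndor : ((Finset.univ.erase h0).toList.map r).Nodup :=
      ((Finset.univ.erase h0).nodup_toList).map hrinj
    rw [hrun, or_fold _ _ houtor hndor, any_map']
    cases hf : f x with
    | true =>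
      by_cases hx0 : h0 = xh
      · have : v2 (r h0) = true := (hs h0).2 ⟨hx0, hf⟩
        rw [this, Bool.true_or]
      · have hany : ((Finset.univ.erase h0).toList.any ((fun c => v2 c) ∘ r)) = true := by
          refine List.any_eq_true.2 ⟨xh, ?_, ?_⟩
          · exact Finset.mem_toList.2 (Finset.mem_erase.2 ⟨fun h => hx0 h.symm, Finset.mem_univ _⟩)
          · exact (hs xh).2 ⟨rfl, hf⟩
        rw [hany, Bool.or_true]
    | false =>
      have h1 : v2 (r h0) = false := by
        cases hb : v2 (r h0) with
        | false => rfl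
        | true =>
          have := ((hs h0).1 hb).2
          rw [hf] at this
          cases this
      have h2 : ((Finset.univ.erase h0).toList.any ((fun c => v2 c) ∘ r)) = false := by
        refine List.any_eq_false.2 fun h hh => fun hsa => ?_
        have := ((hs h).1 hsa).2
        rw [hf] at this
        cases this
      rw [h1, h2, Bool.or_false]
  obtain ⟨C, hC⟩ := card_mem f (({i // i ∈ H} → Bool) × (Fin M ⊕ {i // i ∈ H}))
    label gates hd (r h0) hcorr
  have hcard : Fintype.card (({i // i ∈ H} → Bool) × (Fin M ⊕ {i // i ∈ H}))
      = 2 ^ H.card * (M + H.card) := by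
    simp [Fintype.card_prod, Fintype.card_sum, Fintype.card_fun, Fintype.card_coe]
  have hmem2 : Fintype.card (({i // i ∈ H} → Bool) × (Fin M ⊕ {i // i ∈ H}))
      ∈ {ℓ : ℕ | ∃ C : CompCircuit n ℓ, ∀ x, C.eval x = f x} := ⟨C, hC⟩
  have hfin := Nat.sInf_le hmem2
  rw [hcard] at hfin
  exact hfin

end Aux

theorem wireComplexity_restriction_recursion {n : ℕ} (f : (Fin n → Bool) → Bool)
    (H : Finset (Fin n)) :
    wireComplexity f ≤ 2 ^ H.card *
      (Finset.univ.sup (fun h : {i // i ∈ H} → Bool =>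
        wireComplexity (fun x : Fin n → Bool =>
          f (fun i => if hi : i ∈ H then h ⟨i, hi⟩ else x i))) + H.card) := by
  classical
  rcases Nat.eq_zero_or_pos n with hn | hn
  · subst hn
    have hempty : {ℓ : ℕ | ∃ C : CompCircuit 0 ℓ, ∀ x, C.eval x = f x} = ∅ := by
      ext ℓ
      simp only [Set.mem_setOf_eq, Set.mem_empty_iff_false, iff_false, not_exists]
      intro C _
      exact (C.label C.out).1.elim0
    rw [wireComplexity, hempty, Nat.sInf_empty]
    exact Nat.zero_le _
  · set M := Finset.univ.sup (fun h : {i // i ∈ H} → Bool =>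
      wireComplexity (fun x : Fin n → Bool =>
        f (fun i => if hi : i ∈ H then h ⟨i, hi⟩ else x i))) with hM
    have hmem : ∀ h : {i // i ∈ H} → Bool,
        ∃ C : CompCircuit n (wireComplexity (fun x : Fin n → Bool =>
          f (fun i => if hi : i ∈ H then h ⟨i, hi⟩ else x i))),
          ∀ x, C.eval x = f (fun i => if hi : i ∈ H then h ⟨i, hi⟩ else x i) := by
      intro h
      exact Nat.sInf_mem (Aux.exists_circuit hn _)
    choose C0 hC0 using hmem
    have hle : ∀ h : {i // i ∈ H} → Bool,
        wireComplexity (fun x : Fin n → Bool =>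
          f (fun i => if hi : i ∈ H then h ⟨i, hi⟩ else x i)) ≤ M := by
      intro h
      rw [hM]
      exact Finset.le_sup (f := fun h : {i // i ∈ H} → Bool =>
        wireComplexity (fun x : Fin n → Bool =>
          f (fun i => if hi : i ∈ H then h ⟨i, hi⟩ else x i))) (Finset.mem_univ h)
    choose D hDpad using fun h => Aux.pad hn (hle h) (C0 h)
    exact Aux.combine hn f H M D (fun h x => (hDpad h x).trans (hC0 h x))
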